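/- Let α, A > 0, τ = 1/T₁ with T₁ ∈ ℕ, and suppose a sequence (a_n)_{n≥0} of nonnegative reals satisfies a_{n+1} ≤ (1+3A⁻²τ)⁻¹(a_n + τ c_n) where ∑_{m=nT₁}^{(n+1)T₁-1} c_m² τ ≤ α² for all n. If a₀ ≤ R with R ≥ R₀ := α (1-e^{-A⁻²})⁻¹ ((1-e^{-2A⁻²})/(2A⁻²))^{1/2}, then a_{mT₁} ≤ R for all m ∈ ℕ. (Time-global boundedness of the discrete scheme.) -/

import Mathlib

open Finset Real
lemma geom_reflect (r : ℝ) (hr1 : r < 1) (T : ℕ) :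
    ∑ j ∈ Finset.range T, r ^ (T - j) = r * ((1 - r ^ T) / (1 - r)) := by
  have h1 : ∑ j ∈ Finset.range T, r ^ (T - j) = ∑ j ∈ Finset.range T, r ^ (j + 1) := by
    rw [← Finset.sum_range_reflect]
    apply Finset.sum_congr rfl
    intro j hj
    simp only [Finset.mem_range] at hj
    congr 1
    omega
  rw [h1]
  have h2 : ∑ j ∈ Finset.range T, r ^ (j + 1) = r * ∑ j ∈ Finset.range T, r ^ j := by
    rw [Finset.mul_sum]
    apply Finset.sum_congr rfl
    intro j _
    ring
  rw [h2, geom_sum_eq (by linarith : r ≠ 1)]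
  have h3 : r - 1 ≠ 0 := by linarith
  have h4 : (1:ℝ) - r ≠ 0 := by linarith
  field_simp
  ring

set_option maxHeartbeats 1000000 in
lemma key_ineq (B : ℝ) (hB : 0 < B) (T : ℕ) (hT : 0 < T) :
    ∑ j ∈ Finset.range T, ((1 + 3 * B * (1 / (T:ℝ)))⁻¹ ^ (T - j)) ^ 2 * (1 / (T:ℝ)) ≤
      (1 - (1 + 3 * B * (1 / (T:ℝ)))⁻¹ ^ T) ^ 2 * ((1 - Real.exp (-B))⁻¹) ^ 2 *
        ((1 - Real.exp (-2 * B)) / (2 * B)) := by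
  have hT0 : (0:ℝ) < T := by exact_mod_cast hT
  set x : ℝ := B / T with hxdef
  have hx : 0 < x := div_pos hB hT0
  have hxB : x * T = B := by rw [hxdef, div_mul_cancel₀ _ (ne_of_gt hT0)]
  have hBτ : B * (1 / (T:ℝ)) = x := by rw [hxdef, mul_one_div]
  set lam : ℝ := (1 + 3 * B * (1 / (T:ℝ)))⁻¹ with hlamdef
  have hlam_eq : lam = (1 + 3 * x)⁻¹ := by rw [hlamdef, mul_assoc, hBτ]
  have h13x : (0:ℝ) < 1 + 3 * x := by linarith
  have hlam_pos : 0 < lam := by rw [hlam_eq]; positivity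
  have hlam_lt1 : lam < 1 := by
    rw [hlam_eq, inv_lt_one_iff₀]
    right; linarith
  have heB : Real.exp (-B) = Real.exp (-x) ^ T := by
    rw [← Real.exp_nat_mul]
    congr 1
    rw [← hxB]; ring
  have he2B : Real.exp (-2 * B) = Real.exp (-2 * x) ^ T := by
    rw [← Real.exp_nat_mul]
    congr 1
    rw [← hxB]; ring
  have heBlt1 : Real.exp (-B) < 1 := by
    rw [Real.exp_lt_one_iff]; linarith
  have he2Blt1 : Real.exp (-2 * B) < 1 := by
    rw [Real.exp_lt_one_iff]; linarith
  have heBpos : 0 < Real.exp (-B) := Real.exp_pos _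
  have he2Bpos : 0 < Real.exp (-2 * B) := Real.exp_pos _
  have hLHS : ∑ j ∈ Finset.range T, (lam ^ (T - j)) ^ 2 * (1 / (T:ℝ))
      = (lam ^ 2 * ((1 - (lam ^ 2) ^ T) / (1 - lam ^ 2))) * (1 / (T:ℝ)) := by
    rw [← Finset.sum_mul]
    congr 1
    rw [← geom_reflect (lam ^ 2) (by nlinarith) T]
    apply Finset.sum_congr rfl
    intro j _
    rw [← pow_mul, ← pow_mul]
    congr 1
    ring
  rw [hLHS]
  have hlam2 : 0 < 1 - lam ^ 2 := by nlinarith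
  have hRHSden : (0:ℝ) < 2 * B := by linarith
  by_cases hcase : lam ≤ Real.exp (-x)
  · -- small x case
    have hq : Real.exp (-2 * x) = Real.exp (-x) ^ 2 := by
      rw [sq, ← Real.exp_add]; congr 1; ring
    have hlam2q : lam ^ 2 ≤ Real.exp (-2 * x) := by
      rw [hq]
      exact pow_le_pow_left₀ hlam_pos.le hcase 2
    have hq1 : Real.exp (-2 * x) < 1 := by rw [Real.exp_lt_one_iff]; linarith
    have hqpos : 0 < Real.exp (-2 * x) := Real.exp_pos _
    have h2x : 1 + 2 * x ≤ Real.exp (2 * x) := by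
      have := Real.add_one_le_exp (2 * x); linarith
    have hmulee : Real.exp (2 * x) * Real.exp (-2 * x) = 1 := by
      rw [← Real.exp_add]; norm_num
    have hkey : 2 * x * Real.exp (-2 * x) ≤ 1 - Real.exp (-2 * x) := by
      nlinarith [mul_le_mul_of_nonneg_right h2x hqpos.le]
    have hqT : Real.exp (-2 * x) ^ T ≤ 1 := pow_le_one₀ hqpos.le hq1.le
    have hfrac : Real.exp (-2 * x) * (1 / (T:ℝ)) / (1 - Real.exp (-2 * x)) ≤ 1 / (2 * B) := by
      rw [div_le_div_iff₀ (by linarith) hRHSden]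
      have hBx : (2:ℝ) * B = 2 * x * T := by rw [← hxB]; ring
      rw [hBx]
      have heq : Real.exp (-2 * x) * (1 / (T:ℝ)) * (2 * x * T) = 2 * x * Real.exp (-2 * x) := by
        field_simp
      rw [heq]
      linarith
    have hstep1 : Real.exp (-2 * x) * ((1 - Real.exp (-2 * x) ^ T) / (1 - Real.exp (-2 * x)))
        * (1 / (T:ℝ)) ≤ (1 - Real.exp (-2 * B)) / (2 * B) := by
      rw [he2B]
      have hC : 0 ≤ 1 - Real.exp (-2 * x) ^ T := by linarith
      calc Real.exp (-2 * x) * ((1 - Real.exp (-2 * x) ^ T) / (1 - Real.exp (-2 * x))) * (1 / (T:ℝ))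
          = (1 - Real.exp (-2 * x) ^ T) *
              (Real.exp (-2 * x) * (1 / (T:ℝ)) / (1 - Real.exp (-2 * x))) := by ring
        _ ≤ (1 - Real.exp (-2 * x) ^ T) * (1 / (2 * B)) :=
            mul_le_mul_of_nonneg_left hfrac hC
        _ = (1 - Real.exp (-2 * x) ^ T) / (2 * B) := by ring
    have hstep2 : lam ^ 2 * ((1 - (lam ^ 2) ^ T) / (1 - lam ^ 2)) * (1 / (T:ℝ))
        ≤ Real.exp (-2 * x) * ((1 - Real.exp (-2 * x) ^ T) / (1 - Real.exp (-2 * x)))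
            * (1 / (T:ℝ)) := by
      rw [← geom_reflect (lam ^ 2) (by nlinarith) T, ← geom_reflect (Real.exp (-2 * x)) hq1 T]
      apply mul_le_mul_of_nonneg_right _ (by positivity)
      apply Finset.sum_le_sum
      intro j _
      exact pow_le_pow_left₀ (by positivity) hlam2q _
    have hlamT : lam ^ T ≤ Real.exp (-B) := by
      rw [heB]
      exact pow_le_pow_left₀ hlam_pos.le hcase T
    have hpre : 1 ≤ (1 - lam ^ T) ^ 2 * ((1 - Real.exp (-B))⁻¹) ^ 2 := by
      rw [← mul_pow]
      have h1 : 1 ≤ (1 - lam ^ T) * (1 - Real.exp (-B))⁻¹ := by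
        rw [le_mul_inv_iff₀ (by linarith)]
        linarith
      exact one_le_pow₀ h1
    have hRHSpos : 0 ≤ (1 - Real.exp (-2 * B)) / (2 * B) :=
      div_nonneg (by linarith) hRHSden.le
    calc lam ^ 2 * ((1 - (lam ^ 2) ^ T) / (1 - lam ^ 2)) * (1 / (T:ℝ))
        ≤ (1 - Real.exp (-2 * B)) / (2 * B) := le_trans hstep2 hstep1
      _ = 1 * ((1 - Real.exp (-2 * B)) / (2 * B)) := by ring
      _ ≤ (1 - lam ^ T) ^ 2 * ((1 - Real.exp (-B))⁻¹) ^ 2 * ((1 - Real.exp (-2 * B)) / (2 * B)) :=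
          mul_le_mul_of_nonneg_right hpre hRHSpos
  · -- large x case
    push_neg at hcase
    have hinvmul : (1 + 3 * x)⁻¹ * (1 + 3 * x) = 1 := inv_mul_cancel₀ (ne_of_gt h13x)
    have x23 : 2 / 3 ≤ x := by
      by_contra hlt
      push_neg at hlt
      have h1 : 1 - x ≤ Real.exp (-x) := by
        have := Real.add_one_le_exp (-x); linarith
      have h2 : lam ≤ 1 - x := by
        rw [hlam_eq]
        nlinarith [hinvmul]
      linarith
    have hlampowT : lam ^ T ≤ lam := by
      calc lam ^ T ≤ lam ^ 1 := pow_le_pow_of_le_one hlam_pos.le hlam_lt1.le hT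
        _ = lam := pow_one lam
    have hlamTnn : 0 < 1 - lam ^ T := by
      have : lam ^ T < 1 := pow_lt_one₀ hlam_pos.le hlam_lt1 (by omega)
      linarith
    -- polynomial inequality
    have h1u : 1 - lam = 3 * x * lam := by
      rw [hlam_eq]; linear_combination -hinvmul
    have hu3 : lam ≤ 1 / 3 := by
      rw [hlam_eq]
      have h3le : (3:ℝ) ≤ 1 + 3 * x := by linarith
      calc (1 + 3 * x)⁻¹ ≤ (3:ℝ)⁻¹ := by
            apply inv_anti₀ (by norm_num) h3le
        _ = 1 / 3 := by norm_num
    have hpoly : 2 * x * lam ^ 2 ≤ (1 - lam) ^ 2 * (1 - lam ^ 2) := by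
      have h2 : (1 - lam) ^ 2 * (1 - lam ^ 2) = 9 * x ^ 2 * lam ^ 2 * (1 - lam ^ 2) := by
        rw [h1u]; ring
      rw [h2]
      have h3 : 8 / 9 ≤ 1 - lam ^ 2 := by nlinarith [hu3, hlam_pos]
      have h4 : 2 * x ≤ 8 * x ^ 2 := by nlinarith [x23]
      have h5 : 2 * x * lam ^ 2 ≤ 8 * x ^ 2 * lam ^ 2 :=
        mul_le_mul_of_nonneg_right h4 (sq_nonneg lam)
      have h6 : 9 * x ^ 2 * lam ^ 2 * (8 / 9) ≤ 9 * x ^ 2 * lam ^ 2 * (1 - lam ^ 2) :=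
        mul_le_mul_of_nonneg_left h3 (by positivity)
      nlinarith [h5, h6]
    have hmain : lam ^ 2 / (1 - lam ^ 2) * (1 / (T:ℝ)) ≤ (1 - lam) ^ 2 / (2 * B) := by
      rw [show lam ^ 2 / (1 - lam ^ 2) * (1 / (T:ℝ))
          = (lam ^ 2 * (1 / (T:ℝ))) / (1 - lam ^ 2) by ring]
      rw [div_le_div_iff₀ hlam2 hRHSden]
      have heq : lam ^ 2 * (1 / (T:ℝ)) * (2 * B) = 2 * x * lam ^ 2 := by
        rw [← hxB]; field_simp
      rw [heq]
      nlinarith [hpoly]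
    have hLHSle : lam ^ 2 * ((1 - (lam ^ 2) ^ T) / (1 - lam ^ 2)) * (1 / (T:ℝ))
        ≤ lam ^ 2 * (1 / (1 - lam ^ 2)) * (1 / (T:ℝ)) := by
      have hnum : 1 - (lam ^ 2) ^ T ≤ 1 := by
        nlinarith [pow_nonneg (sq_nonneg lam) T]
      apply mul_le_mul_of_nonneg_right _ (by positivity)
      apply mul_le_mul_of_nonneg_left _ (sq_nonneg lam)
      rw [div_le_div_iff₀ hlam2 hlam2]
      nlinarith [hnum, hlam2]
    have ht2 : Real.exp (-2 * B) = Real.exp (-B) ^ 2 := by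
      rw [sq, ← Real.exp_add]; congr 1; ring
    have h1e : 0 < 1 - Real.exp (-B) := by linarith
    have h2pre : 1 ≤ ((1 - Real.exp (-B))⁻¹) ^ 2 * (1 - Real.exp (-2 * B)) := by
      rw [ht2]
      have hsq : (1 - Real.exp (-B)) ^ 2 ≤ 1 - Real.exp (-B) ^ 2 := by
        nlinarith [heBpos, heBlt1]
      calc (1:ℝ) = ((1 - Real.exp (-B))⁻¹) ^ 2 * (1 - Real.exp (-B)) ^ 2 := by
            rw [← mul_pow, inv_mul_cancel₀ h1e.ne']; norm_num
        _ ≤ ((1 - Real.exp (-B))⁻¹) ^ 2 * (1 - Real.exp (-B) ^ 2) :=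
            mul_le_mul_of_nonneg_left hsq (by positivity)
    have h1lam : (1 - lam) ^ 2 ≤ (1 - lam ^ T) ^ 2 :=
      pow_le_pow_left₀ (by linarith) (by linarith [hlampowT]) 2
    have hnum2 : (1 - lam) ^ 2
        ≤ (1 - lam ^ T) ^ 2 * (((1 - Real.exp (-B))⁻¹) ^ 2 * (1 - Real.exp (-2 * B))) := by
      calc (1 - lam) ^ 2 ≤ (1 - lam ^ T) ^ 2 := h1lam
        _ = (1 - lam ^ T) ^ 2 * 1 := by ring
        _ ≤ (1 - lam ^ T) ^ 2 * (((1 - Real.exp (-B))⁻¹) ^ 2 * (1 - Real.exp (-2 * B))) :=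
            mul_le_mul_of_nonneg_left h2pre (sq_nonneg _)
    calc lam ^ 2 * ((1 - (lam ^ 2) ^ T) / (1 - lam ^ 2)) * (1 / (T:ℝ))
        ≤ lam ^ 2 * (1 / (1 - lam ^ 2)) * (1 / (T:ℝ)) := hLHSle
      _ = lam ^ 2 / (1 - lam ^ 2) * (1 / (T:ℝ)) := by ring
      _ ≤ (1 - lam) ^ 2 / (2 * B) := hmain
      _ ≤ ((1 - lam ^ T) ^ 2 * (((1 - Real.exp (-B))⁻¹) ^ 2 * (1 - Real.exp (-2 * B)))) / (2 * B) := by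
          rw [div_eq_mul_inv, div_eq_mul_inv]
          exact mul_le_mul_of_nonneg_right hnum2 (inv_nonneg.mpr hRHSden.le)
      _ = (1 - lam ^ T) ^ 2 * ((1 - Real.exp (-B))⁻¹) ^ 2 * ((1 - Real.exp (-2 * B)) / (2 * B)) := by
          ring


/-- Abstract recurrence behind **time-global solvability** (Theorem 2.11):
if `a_{n+1} ≤ (1+3A⁻²τ)⁻¹(a_n + τ c_n)`, the forcing satisfies
`∑_{m=nT₁}^{(n+1)T₁-1} c_m² τ ≤ α²`, and `a₀ ≤ R` with
`R ≥ R₀ = α(1-e^{-A⁻²})⁻¹ ((1-e^{-2A⁻²})/(2A⁻²))^{1/2}`, then `a_{mT₁} ≤ R` for all `m`. -/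
theorem time_global_boundedness (α A R τ : ℝ) (T₁ : ℕ)
    (hα : 0 < α) (hA : 0 < A) (hT₁ : 0 < T₁) (hτ : τ = 1 / (T₁ : ℝ))
    (a c : ℕ → ℝ) (ha : ∀ n, 0 ≤ a n) (hc : ∀ n, 0 ≤ c n)
    (hrec : ∀ n, a (n + 1) ≤ (1 + 3 * (A⁻¹) ^ 2 * τ)⁻¹ * (a n + τ * c n))
    (hforce : ∀ n : ℕ, ∑ m ∈ Finset.Ico (n * T₁) ((n + 1) * T₁), (c m) ^ 2 * τ ≤ α ^ 2)
    (hR : R ≥ α * (1 - Real.exp (-(A⁻¹) ^ 2))⁻¹ *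
      Real.sqrt ((1 - Real.exp (-2 * (A⁻¹) ^ 2)) / (2 * (A⁻¹) ^ 2)))
    (ha0 : a 0 ≤ R) :
    ∀ m : ℕ, a (m * T₁) ≤ R := by
  have hT0 : (0:ℝ) < T₁ := by exact_mod_cast hT₁
  set B : ℝ := (A⁻¹) ^ 2 with hBdef
  have hB : 0 < B := by positivity
  have hτpos : 0 < τ := by rw [hτ]; positivity
  set lam : ℝ := (1 + 3 * B * τ)⁻¹ with hlamdef
  have hlam_pos : 0 < lam := by
    rw [hlamdef]
    have : 0 < 1 + 3 * B * τ := by positivity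
    positivity
  have hlam_le1 : lam ≤ 1 := by
    rw [hlamdef]
    rw [inv_le_one_iff₀]
    right
    nlinarith [mul_pos hB hτpos]
  have hlamT1 : 0 ≤ 1 - lam ^ T₁ := by
    have := pow_le_one₀ hlam_pos.le hlam_le1 (n := T₁)
    linarith
  have heBlt1 : Real.exp (-B) < 1 := by rw [Real.exp_lt_one_iff]; linarith
  have he2Blt1 : Real.exp (-2 * B) < 1 := by rw [Real.exp_lt_one_iff]; linarith
  have hs : 0 ≤ (1 - Real.exp (-2 * B)) / (2 * B) := by
    apply div_nonneg (by linarith) (by linarith)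
  set R₀ : ℝ := α * (1 - Real.exp (-B))⁻¹ *
    Real.sqrt ((1 - Real.exp (-2 * B)) / (2 * B)) with hR0def
  have hR0nn : 0 ≤ R₀ := by
    rw [hR0def]
    have : 0 < 1 - Real.exp (-B) := by linarith
    positivity
  have hRnn : 0 ≤ R := le_trans hR0nn hR
  -- the one-block iteration bound
  have iter : ∀ s k : ℕ, a (s + k) ≤ lam ^ k * a s +
      ∑ j ∈ Finset.range k, lam ^ (k - j) * (τ * c (s + j)) := by
    intro s k
    induction k with
    | zero => simp
    | succ k ih =>
      have h1 : a (s + (k + 1)) = a ((s + k) + 1) := by ring_nf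
      rw [h1]
      calc a ((s + k) + 1) ≤ lam * (a (s + k) + τ * c (s + k)) := hrec _
        _ ≤ lam * ((lam ^ k * a s + ∑ j ∈ Finset.range k, lam ^ (k - j) * (τ * c (s + j)))
              + τ * c (s + k)) := by
            apply mul_le_mul_of_nonneg_left _ hlam_pos.le
            linarith
        _ = lam ^ (k+1) * a s + (∑ j ∈ Finset.range k, lam * (lam ^ (k - j) * (τ * c (s + j)))
              + lam * (τ * c (s + k))) := by
            rw [mul_add, mul_add, Finset.mul_sum, pow_succ]; ring
        _ = lam ^ (k+1) * a s + ∑ j ∈ Finset.range (k+1), lam ^ (k + 1 - j) * (τ * c (s + j)) := by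
            congr 1
            rw [Finset.sum_range_succ]
            congr 1
            · apply Finset.sum_congr rfl
              intro j hj
              simp only [Finset.mem_range] at hj
              have : k + 1 - j = (k - j) + 1 := by omega
              rw [this, pow_succ]
              ring
            · simp
  -- the key inequality, specialized
  have hkey : ∑ j ∈ Finset.range T₁, (lam ^ (T₁ - j)) ^ 2 * τ ≤
      (1 - lam ^ T₁) ^ 2 * ((1 - Real.exp (-B))⁻¹) ^ 2 *
        ((1 - Real.exp (-2 * B)) / (2 * B)) := by
    have := key_ineq B hB T₁ hT₁
    rw [hlamdef, hτ]
    exact this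
  -- one-block step
  have hstep : ∀ n : ℕ, a (n * T₁) ≤ R → a ((n + 1) * T₁) ≤ R := by
    intro n hn
    have hidx : (n + 1) * T₁ = n * T₁ + T₁ := by ring
    rw [hidx]
    have hiter := iter (n * T₁) T₁
    set D : ℝ := ∑ j ∈ Finset.range T₁, lam ^ (T₁ - j) * (τ * c (n * T₁ + j)) with hDdef
    have hDnn : 0 ≤ D := by
      apply Finset.sum_nonneg
      intro j _
      have := hc (n * T₁ + j)
      positivity
    -- Cauchy–Schwarz
    have hforce' : ∑ j ∈ Finset.range T₁, c (n * T₁ + j) ^ 2 * τ ≤ α ^ 2 := by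
      have h := hforce n
      rwa [Finset.sum_Ico_eq_sum_range, show (n + 1) * T₁ - n * T₁ = T₁ by ring_nf; omega] at h
    have hCS : D ^ 2 ≤ (∑ j ∈ Finset.range T₁, (lam ^ (T₁ - j)) ^ 2 * τ) *
        (∑ j ∈ Finset.range T₁, c (n * T₁ + j) ^ 2 * τ) := by
      have hD2 : D = ∑ j ∈ Finset.range T₁,
          (lam ^ (T₁ - j) * Real.sqrt τ) * (Real.sqrt τ * c (n * T₁ + j)) := by
        rw [hDdef]
        apply Finset.sum_congr rfl
        intro j _
        rw [show (lam ^ (T₁ - j) * Real.sqrt τ) * (Real.sqrt τ * c (n * T₁ + j))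
            = lam ^ (T₁ - j) * ((Real.sqrt τ * Real.sqrt τ) * c (n * T₁ + j)) by ring,
          Real.mul_self_sqrt hτpos.le]
      rw [hD2]
      have := Finset.sum_mul_sq_le_sq_mul_sq (Finset.range T₁)
        (fun j => lam ^ (T₁ - j) * Real.sqrt τ) (fun j => Real.sqrt τ * c (n * T₁ + j))
      calc (∑ j ∈ Finset.range T₁,
            (lam ^ (T₁ - j) * Real.sqrt τ) * (Real.sqrt τ * c (n * T₁ + j))) ^ 2
          ≤ (∑ j ∈ Finset.range T₁, (lam ^ (T₁ - j) * Real.sqrt τ) ^ 2) *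
            (∑ j ∈ Finset.range T₁, (Real.sqrt τ * c (n * T₁ + j)) ^ 2) := this
        _ = (∑ j ∈ Finset.range T₁, (lam ^ (T₁ - j)) ^ 2 * τ) *
            (∑ j ∈ Finset.range T₁, c (n * T₁ + j) ^ 2 * τ) := by
            congr 1 <;> apply Finset.sum_congr rfl <;> intro j _ <;>
              rw [mul_pow, Real.sq_sqrt hτpos.le] <;> ring
    have hsum1nn : 0 ≤ ∑ j ∈ Finset.range T₁, (lam ^ (T₁ - j)) ^ 2 * τ := by
      apply Finset.sum_nonneg
      intro j _
      positivity
    have hD2le : D ^ 2 ≤ ((1 - lam ^ T₁) * R₀) ^ 2 := by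
      have h1 : D ^ 2 ≤ (∑ j ∈ Finset.range T₁, (lam ^ (T₁ - j)) ^ 2 * τ) * α ^ 2 := by
        calc D ^ 2 ≤ (∑ j ∈ Finset.range T₁, (lam ^ (T₁ - j)) ^ 2 * τ) *
              (∑ j ∈ Finset.range T₁, c (n * T₁ + j) ^ 2 * τ) := hCS
          _ ≤ (∑ j ∈ Finset.range T₁, (lam ^ (T₁ - j)) ^ 2 * τ) * α ^ 2 :=
              mul_le_mul_of_nonneg_left hforce' hsum1nn
      have h2 : ((1 - lam ^ T₁) * R₀) ^ 2 = ((1 - lam ^ T₁) ^ 2 * ((1 - Real.exp (-B))⁻¹) ^ 2 *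
          ((1 - Real.exp (-2 * B)) / (2 * B))) * α ^ 2 := by
        rw [hR0def, mul_pow, mul_pow, mul_pow, Real.sq_sqrt hs]
        ring
      rw [h2]
      calc D ^ 2 ≤ (∑ j ∈ Finset.range T₁, (lam ^ (T₁ - j)) ^ 2 * τ) * α ^ 2 := h1
        _ ≤ ((1 - lam ^ T₁) ^ 2 * ((1 - Real.exp (-B))⁻¹) ^ 2 *
            ((1 - Real.exp (-2 * B)) / (2 * B))) * α ^ 2 :=
            mul_le_mul_of_nonneg_right hkey (sq_nonneg α)
    have hDle : D ≤ (1 - lam ^ T₁) * R₀ := by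
      have h1 : 0 ≤ (1 - lam ^ T₁) * R₀ := mul_nonneg hlamT1 hR0nn
      nlinarith [hD2le, hDnn, h1]
    calc a (n * T₁ + T₁) ≤ lam ^ T₁ * a (n * T₁) + D := hiter
      _ ≤ lam ^ T₁ * R + (1 - lam ^ T₁) * R₀ := by
          apply add_le_add _ hDle
          exact mul_le_mul_of_nonneg_left hn (by positivity)
      _ ≤ lam ^ T₁ * R + (1 - lam ^ T₁) * R := by
          apply add_le_add le_rfl
          exact mul_le_mul_of_nonneg_left hR hlamT1
      _ = R := by ring
  intro m
  induction m with
  | zero => simpa using ha0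
  | succ m ih => exact hstep m ih
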